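/- Let 0 < ρ < 1, let s ≥ 1, u ≥ 2, t ≥ s, and set m = ⌊(1-ρ)²t⌋, n = ⌊ρ²t⌋, k = ⌊(1-ρ)²s⌋, l = ⌊ρ²s⌋, and assume k + u ≤ m. Then (√(k+u+1) + √l)² + (√(m-k-u) + √(n-l))² ≤ t + C₂(ρ) - C₁(ρ)·u²/t for constants C₁(ρ) > 0 and C₂(ρ) < ∞ depending only on ρ. -/

import Mathlib

lemma key_id (c x y : ℝ) (hc : 0 < c) (hx : 0 ≤ x) (hy : 0 ≤ y) :
    (Real.sqrt x + Real.sqrt y) ^ 2 + (Real.sqrt (c * x) - Real.sqrt (y / c)) ^ 2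
      = (1 + c) * x + (1 + 1 / c) * y := by
  have h1 : Real.sqrt (c*x) = Real.sqrt c * Real.sqrt x := Real.sqrt_mul hc.le x
  have h2 : Real.sqrt (y/c) = Real.sqrt y / Real.sqrt c := Real.sqrt_div hy c
  have hsc : Real.sqrt c ^ 2 = c := Real.sq_sqrt hc.le
  have hsx : Real.sqrt x ^ 2 = x := Real.sq_sqrt hx
  have hsy : Real.sqrt y ^ 2 = y := Real.sq_sqrt hy
  have hsc0 : Real.sqrt c ≠ 0 := by positivity
  have hc0 : c ≠ 0 := hc.ne'
  rw [h1, h2]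
  rw [sub_sq, add_sq, div_pow, mul_pow, hsc, hsx, hsy]
  field_simp
  ring

set_option maxHeartbeats 1000000 in
theorem stmt_18 (ρ : ℝ) (hρ0 : 0 < ρ) (hρ1 : ρ < 1) :
    ∃ C₁ > (0 : ℝ), ∃ C₂ : ℝ,
      ∀ s u t : ℝ, 1 ≤ s → 2 ≤ u → s ≤ t →
        ((⌊(1 - ρ) ^ 2 * s⌋ : ℝ) + u ≤ (⌊(1 - ρ) ^ 2 * t⌋ : ℝ)) →
        (Real.sqrt ((⌊(1 - ρ) ^ 2 * s⌋ : ℝ) + u + 1) +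
            Real.sqrt (⌊ρ ^ 2 * s⌋ : ℝ)) ^ 2 +
          (Real.sqrt ((⌊(1 - ρ) ^ 2 * t⌋ : ℝ) - (⌊(1 - ρ) ^ 2 * s⌋ : ℝ) - u) +
            Real.sqrt ((⌊ρ ^ 2 * t⌋ : ℝ) - (⌊ρ ^ 2 * s⌋ : ℝ))) ^ 2 ≤
        t + C₂ - C₁ * u ^ 2 / t := by
  have h1ρ : 0 < 1 - ρ := by linarith
  have hsq1 : (1 - ρ) ^ 2 ≤ 1 := by nlinarith
  have hρsq : ρ ^ 2 ≤ 1 := by nlinarith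
  set c : ℝ := ρ / (1 - ρ) with hcdef
  have hc : 0 < c := div_pos hρ0 h1ρ
  have hcsq : c ^ 2 * (1 - ρ) ^ 2 = ρ ^ 2 := by
    rw [hcdef]; field_simp
  have hc1 : 1 + c = 1 / (1 - ρ) := by rw [hcdef]; field_simp; ring
  have hc2 : 1 + 1 / c = 1 / ρ := by rw [hcdef]; field_simp; ring
  clear_value c
  have hden : 0 < 4 * c + 2 / c := by positivity
  refine ⟨c ^ 2 / (4 * c + 2 / c), by positivity, 1 / (1 - ρ), ?_⟩
  intro s u t hs hu hst hku
  have ht1 : (1 : ℝ) ≤ t := le_trans hs hst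
  have ht0 : (0 : ℝ) < t := by linarith
  set a : ℝ := (⌊(1 - ρ) ^ 2 * s⌋ : ℝ) with hadef
  set b : ℝ := (⌊ρ ^ 2 * s⌋ : ℝ) with hbdef
  set m : ℝ := (⌊(1 - ρ) ^ 2 * t⌋ : ℝ) with hmdef
  set n : ℝ := (⌊ρ ^ 2 * t⌋ : ℝ) with hndef
  -- basic floor facts
  have ha0 : (0 : ℝ) ≤ a := by
    rw [hadef]; exact_mod_cast Int.floor_nonneg.mpr (by positivity)
  have hb0 : (0 : ℝ) ≤ b := by
    rw [hbdef]; exact_mod_cast Int.floor_nonneg.mpr (by positivity)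
  have ha_le : a ≤ (1 - ρ) ^ 2 * s := Int.floor_le _
  have ha_gt : (1 - ρ) ^ 2 * s - 1 < a := Int.sub_one_lt_floor _
  have hb_le : b ≤ ρ ^ 2 * s := Int.floor_le _
  have hm_le : m ≤ (1 - ρ) ^ 2 * t := Int.floor_le _
  have hn_le : n ≤ ρ ^ 2 * t := Int.floor_le _
  have hbn : b ≤ n := by
    rw [hbdef, hndef]
    exact_mod_cast Int.floor_le_floor
      (mul_le_mul_of_nonneg_left hst (by positivity))
  clear_value a b m n
  have hm_t : m ≤ t := by
    have h := mul_le_mul_of_nonneg_right hsq1 ht0.le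
    rw [one_mul] at h
    linarith
  have hb_t : b ≤ t := by
    have h := mul_le_mul_of_nonneg_right hρsq (by linarith : (0:ℝ) ≤ s)
    rw [one_mul] at h
    linarith
  -- nonnegativity of the four arguments
  have hx1 : (0 : ℝ) ≤ a + u + 1 := by linarith
  have hx2 : (0 : ℝ) ≤ m - a - u := by linarith
  have hy2 : (0 : ℝ) ≤ n - b := by linarith
  have k1 := key_id c (a + u + 1) b hc hx1 hb0
  have k2 := key_id c (m - a - u) (n - b) hc hx2 hy2
  -- the deficit term
  set A : ℝ := Real.sqrt (c * (a + u + 1)) with hAdef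
  set B : ℝ := Real.sqrt (b / c) with hBdef
  have hA0 : 0 ≤ A := Real.sqrt_nonneg _
  have hB0 : 0 ≤ B := Real.sqrt_nonneg _
  have hA2 : A ^ 2 = c * (a + u + 1) := Real.sq_sqrt (by positivity)
  have hB2 : B ^ 2 = b / c := Real.sq_sqrt (by positivity)
  have hApos : 0 < A := Real.sqrt_pos.mpr (by positivity)
  clear_value A B
  -- numerator lower bound : c*(a+u+1) - b/c ≥ c*u
  have hnum : c * u ≤ c * (a + u + 1) - b / c := by
    have h0 : (1 - ρ) ^ 2 * s ≤ a + 1 := by linarith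
    have h1 : ρ ^ 2 * s ≤ c ^ 2 * (a + 1) := by
      calc ρ ^ 2 * s = c ^ 2 * ((1 - ρ) ^ 2 * s) := by rw [← hcsq]; ring
        _ ≤ c ^ 2 * (a + 1) := mul_le_mul_of_nonneg_left h0 (by positivity)
    have h2 : b ≤ c ^ 2 * (a + 1) := le_trans hb_le h1
    have h3 : c * (a + u + 1) - b / c - c * u = (c ^ 2 * (a + 1) - b) / c := by
      field_simp; ring
    have h4 : (0:ℝ) ≤ (c ^ 2 * (a + 1) - b) / c :=
      div_nonneg (by linarith) hc.le
    linarith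
  -- upper bound on A + B
  set D : ℝ := Real.sqrt ((4 * c + 2 / c) * t) with hDdef
  have hD0 : 0 < D := Real.sqrt_pos.mpr (by positivity)
  have hD2 : D ^ 2 = (4 * c + 2 / c) * t := Real.sq_sqrt (by positivity)
  clear_value D
  have hABD : A + B ≤ D := by
    have hsum2 : (A + B) ^ 2 ≤ D ^ 2 := by
      have hexp : (A + B) ^ 2 + (A - B) ^ 2 = 2 * (A ^ 2 + B ^ 2) := by ring
      have h1 : c * (a + u + 1) ≤ c * (2 * t) :=
        mul_le_mul_of_nonneg_left (by linarith) hc.le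
      have h2 : b / c ≤ t / c := by gcongr
      have h3 : D ^ 2 = 2 * (c * (2 * t) + t / c) := by rw [hD2]; ring
      linarith [sq_nonneg (A - B), hexp, h1, h2, h3, hA2, hB2]
    exact le_of_pow_le_pow_left₀ two_ne_zero hD0.le hsum2
  have hABpos : 0 < A + B := by linarith
  -- lower bound on deficit
  have hdiff : c * u / D ≤ A - B := by
    have h0 : (A - B) * (A + B) = A ^ 2 - B ^ 2 := by ring
    have h1 : c * u ≤ (A - B) * (A + B) := by linarith [hnum, hA2, hB2, h0]
    have h2 : c * u / (A + B) ≤ A - B := (div_le_iff₀ hABpos).mpr h1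
    have h3 : c * u / D ≤ c * u / (A + B) := by
      gcongr
    linarith
  have hdefsq : c ^ 2 * u ^ 2 / ((4 * c + 2 / c) * t) ≤ (A - B) ^ 2 := by
    have h0 : (0:ℝ) ≤ c * u / D := by positivity
    have h1 : (c * u / D) ^ 2 ≤ (A - B) ^ 2 := pow_le_pow_left₀ h0 hdiff 2
    have h2 : (c * u / D) ^ 2 = c ^ 2 * u ^ 2 / ((4 * c + 2 / c) * t) := by
      rw [div_pow, hD2, mul_pow]
    rw [← h2]; exact h1
  -- assemble
  have E2 : 0 ≤ (Real.sqrt (c * (m - a - u)) - Real.sqrt ((n - b) / c)) ^ 2 := sq_nonneg _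
  have hmain : (1 + c) * (m + 1) + (1 + 1 / c) * n ≤ t + 1 / (1 - ρ) := by
    rw [hc1, hc2]
    have h1 : (1 / (1 - ρ)) * (m + 1) ≤ (1 - ρ) * t + 1 / (1 - ρ) := by
      rw [div_mul_eq_mul_div, div_le_iff₀ h1ρ]
      have he : ((1 - ρ) * t + 1 / (1 - ρ)) * (1 - ρ) = (1 - ρ) ^ 2 * t + 1 := by
        field_simp
      rw [he, one_mul]
      linarith
    have h2 : (1 / ρ) * n ≤ ρ * t := by
      rw [div_mul_eq_mul_div, div_le_iff₀ hρ0]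
      have he : ρ * t * ρ = ρ ^ 2 * t := by ring
      rw [one_mul, he]
      linarith
    linarith
  have hfrac : c ^ 2 * u ^ 2 / ((4 * c + 2 / c) * t) =
      c ^ 2 / (4 * c + 2 / c) * u ^ 2 / t := by
    field_simp
  calc (Real.sqrt (a + u + 1) + Real.sqrt b) ^ 2 +
        (Real.sqrt (m - a - u) + Real.sqrt (n - b)) ^ 2
      = ((1 + c) * (a + u + 1) + (1 + 1 / c) * b - (A - B) ^ 2) +
        ((1 + c) * (m - a - u) + (1 + 1 / c) * (n - b) -
          (Real.sqrt (c * (m - a - u)) - Real.sqrt ((n - b) / c)) ^ 2) := by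
        linarith [k1, k2]
    _ ≤ (1 + c) * (m + 1) + (1 + 1 / c) * n - (A - B) ^ 2 := by
        have hsumeq : (1 + c) * (a + u + 1) + (1 + c) * (m - a - u) +
            (1 + 1 / c) * b + (1 + 1 / c) * (n - b) =
            (1 + c) * (m + 1) + (1 + 1 / c) * n := by ring
        linarith [E2, hsumeq]
    _ ≤ t + 1 / (1 - ρ) - c ^ 2 * u ^ 2 / ((4 * c + 2 / c) * t) := by linarith
    _ = t + 1 / (1 - ρ) - c ^ 2 / (4 * c + 2 / c) * u ^ 2 / t := by rw [hfrac]
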